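/- For the perturbed collapsed walk U' and the unit vector |ψ₁⟩ = (1/c) Σ_{x=0}^{n/2−1} (1/√(2C(n−1,x))) (|R,x⟩ − |L,x+1⟩) with c² = Σ_{x=0}^{n/2−1} 1/C(n−1,x), one has ⟨ψ₁|U'|ψ₁⟩ = 1 − 1/(2c² C(n−1, n/2)). -/

import Mathlib

open Matrix

/-- `cos ω_x = 1 - 2x/n`. -/
noncomputable def cosOmega (n x : ℕ) : ℝ := 1 - 2 * x / n

/-- `sin ω_x = (2/n)√(x(n-x))`. -/
noncomputable def sinOmega (n x : ℕ) : ℝ := (2 / n) * Real.sqrt (x * ((n : ℝ) - x))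

/-- The collapsed (line) walk operator, on the basis `|R,x⟩ = (false, x)`,
`|L,x⟩ = (true, x)`. -/
noncomputable def collapsedU (n : ℕ) :
    Matrix (Bool × Fin (n + 1)) (Bool × Fin (n + 1)) ℂ :=
  Matrix.of fun p q =>
    if p.1 = false ∧ q.1 = true ∧ (q.2 : ℕ) = (p.2 : ℕ) + 1 then (-(cosOmega n q.2) : ℝ)
    else if p.1 = false ∧ q.1 = false ∧ (q.2 : ℕ) = (p.2 : ℕ) + 1 then (sinOmega n q.2 : ℝ)
    else if p.1 = true ∧ q.1 = true ∧ (q.2 : ℕ) + 1 = (p.2 : ℕ) then (sinOmega n q.2 : ℝ)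
    else if p.1 = true ∧ q.1 = false ∧ (q.2 : ℕ) + 1 = (p.2 : ℕ) then (cosOmega n q.2 : ℝ)
    else 0

/-- The perturbed collapsed walk operator `U' = U − 2|L,1⟩⟨R,0|`. -/
noncomputable def collapsedU' (n : ℕ) :
    Matrix (Bool × Fin (n + 1)) (Bool × Fin (n + 1)) ℂ :=
  collapsedU n -
    (2 : ℂ) • Matrix.of fun p q =>
      if p = (true, (1 : Fin (n + 1))) ∧ q = (false, (0 : Fin (n + 1))) then 1 else 0

/-- The square `c²` of the normalization constant:
`c² = Σ_{x=0}^{n/2−1} 1/C(n−1,x)`. -/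
noncomputable def cSq (n : ℕ) : ℝ :=
  ∑ x ∈ Finset.range (n / 2), (1 : ℝ) / ((n - 1).choose x)

/-- The second approximate eigenvector
`|ψ₁⟩ = (1/c) Σ_{x=0}^{n/2−1} (1/√(2C(n−1,x))) (|R,x⟩ − |L,x+1⟩)`. -/
noncomputable def linePsi1 (n : ℕ) : Bool × Fin (n + 1) → ℂ :=
  fun p =>
    if p.1 = false ∧ (p.2 : ℕ) < n / 2 then
      ((1 / (Real.sqrt (cSq n) * Real.sqrt (2 * (n - 1).choose p.2))) : ℝ)
    else if p.1 = true ∧ 1 ≤ (p.2 : ℕ) ∧ (p.2 : ℕ) ≤ n / 2 then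
      (-(1 / (Real.sqrt (cSq n) * Real.sqrt (2 * (n - 1).choose ((p.2 : ℕ) - 1)))) : ℝ)
    else 0

/-! ### Auxiliary definitions and lemmas -/

noncomputable def aC (n i : ℕ) : ℝ :=
  1 / (Real.sqrt (cSq n) * Real.sqrt (2 * (n - 1).choose i))

noncomputable def pR (n : ℕ) : Bool → ℕ → ℝ := fun b i =>
  if b then (if 1 ≤ i ∧ i ≤ n / 2 then -aC n (i - 1) else 0)
  else (if i < n / 2 then aC n i else 0)

noncomputable def UR (n : ℕ) : Bool → ℕ → Bool → ℕ → ℝ := fun b i b' j =>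
  (if b = false ∧ b' = true ∧ j = i + 1 then -cosOmega n j else 0)
  + (if b = false ∧ b' = false ∧ j = i + 1 then sinOmega n j else 0)
  + (if b = true ∧ b' = true ∧ j + 1 = i then sinOmega n j else 0)
  + (if b = true ∧ b' = false ∧ j + 1 = i then cosOmega n j else 0)
  + (if b = true ∧ i = 1 ∧ b' = false ∧ j = 0 then (-2 : ℝ) else 0)

lemma psi_eq (n : ℕ) (p : Bool × Fin (n+1)) :
    linePsi1 n p = ((pR n p.1 (p.2 : ℕ) : ℝ) : ℂ) := by
  obtain ⟨b, i⟩ := p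
  cases b <;> simp [linePsi1, pR, aC] <;> split_ifs <;> simp

lemma star_psi (n : ℕ) : star (linePsi1 n) = linePsi1 n := by
  funext p
  rw [Pi.star_apply, psi_eq]
  exact Complex.conj_ofReal _

lemma entryR (n : ℕ) (hn : 2 ≤ n) (p q : Bool × Fin (n+1)) :
    collapsedU' n p q = ((UR n p.1 (p.2 : ℕ) q.1 (q.2 : ℕ) : ℝ) : ℂ) := by
  obtain ⟨b, i⟩ := p
  obtain ⟨b', j⟩ := q
  have h1 : ((1 : Fin (n+1)) : ℕ) = 1 := by
    simp [Fin.val_one', Nat.mod_eq_of_lt (show 1 < n+1 by omega)]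
  simp only [collapsedU', collapsedU, UR, Matrix.sub_apply, Matrix.smul_apply, Matrix.of_apply,
    Prod.mk.injEq, Fin.ext_iff, h1, Fin.val_zero]
  cases b <;> cases b' <;> simp <;> split_ifs <;> push_cast <;> ring_nf

lemma finsum_succ (N : ℕ) (f : ℕ → ℕ → ℝ) :
    (∑ x : Fin (N+1), ∑ y : Fin (N+1), if (y:ℕ) = (x:ℕ)+1 then f x y else 0)
      = ∑ i ∈ Finset.range N, f i (i+1) := by
  have h1 : ∀ x : Fin (N+1), (∑ y : Fin (N+1), if (y:ℕ) = (x:ℕ)+1 then f x y else 0)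
      = if (x:ℕ) < N then f x ((x:ℕ)+1) else 0 := by
    intro x
    rw [Fin.sum_univ_eq_sum_range (fun k => if k = (x:ℕ)+1 then f x k else 0) (N+1),
      Finset.sum_ite_eq']
    simp [Nat.lt_succ_iff, Nat.succ_le_iff]
  simp only [h1]
  rw [Fin.sum_univ_eq_sum_range (fun k => if k < N then f k (k+1) else 0) (N+1),
    Finset.sum_range_succ]
  simp only [lt_irrefl, if_false, add_zero]
  exact Finset.sum_congr rfl fun i hi => if_pos (Finset.mem_range.mp hi)

lemma finsum_pred (N : ℕ) (f : ℕ → ℕ → ℝ) :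
    (∑ x : Fin (N+1), ∑ y : Fin (N+1), if (y:ℕ)+1 = (x:ℕ) then f x y else 0)
      = ∑ j ∈ Finset.range N, f (j+1) j := by
  rw [Finset.sum_comm]
  have h1 : ∀ y : Fin (N+1), (∑ x : Fin (N+1), if (y:ℕ)+1 = (x:ℕ) then f x y else 0)
      = if (y:ℕ) < N then f ((y:ℕ)+1) y else 0 := by
    intro y
    rw [Fin.sum_univ_eq_sum_range (fun k => if (y:ℕ)+1 = k then f k y else 0) (N+1),
      Finset.sum_ite_eq]
    simp [Nat.lt_succ_iff, Nat.succ_le_iff]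
  simp only [h1]
  rw [Fin.sum_univ_eq_sum_range (fun k => if k < N then f (k+1) k else 0) (N+1),
    Finset.sum_range_succ]
  simp only [lt_irrefl, if_false, add_zero]
  exact Finset.sum_congr rfl fun i hi => if_pos (Finset.mem_range.mp hi)

lemma finsum_pair (N : ℕ) (hN : 1 ≤ N) (f : ℕ → ℕ → ℝ) :
    (∑ x : Fin (N+1), ∑ y : Fin (N+1), if (x:ℕ) = 1 ∧ (y:ℕ) = 0 then f x y else 0)
      = f 1 0 := by
  have h1 : ∀ x : Fin (N+1), (∑ y : Fin (N+1), if (x:ℕ) = 1 ∧ (y:ℕ) = 0 then f x y else 0)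
      = if (x:ℕ) = 1 then f 1 0 else 0 := by
    intro x
    by_cases hx : (x:ℕ) = 1
    · simp only [hx, true_and, if_pos]
      rw [Fin.sum_univ_eq_sum_range (fun k => if k = 0 then f 1 k else 0) (N+1),
        Finset.sum_ite_eq']
      simp
    · simp [hx]
  simp only [h1]
  rw [Fin.sum_univ_eq_sum_range (fun k => if k = 1 then f 1 0 else 0) (N+1),
    Finset.sum_ite_eq']
  rw [if_pos (Finset.mem_range.mpr (by omega))]

lemma step1 (n : ℕ) (hn : 2 ≤ n) :
    star (linePsi1 n) ⬝ᵥ (collapsedU' n).mulVec (linePsi1 n)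
      = (((∑ i ∈ Finset.range n, pR n false i * sinOmega n (i+1) * pR n false (i+1))
        - (∑ i ∈ Finset.range n, pR n false i * cosOmega n (i+1) * pR n true (i+1))
        + (∑ j ∈ Finset.range n, pR n true (j+1) * sinOmega n j * pR n true j)
        + (∑ j ∈ Finset.range n, pR n true (j+1) * cosOmega n j * pR n false j)
        - 2 * (pR n true 1 * pR n false 0) : ℝ) : ℂ) := by
  rw [star_psi]
  simp only [dotProduct, mulVec, psi_eq, entryR n hn, ← Complex.ofReal_mul,
    ← Complex.ofReal_sum]
  rw [Complex.ofReal_inj]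
  simp only [Fintype.sum_prod_type, Fintype.sum_bool, UR]
  simp only [show (true = false) ↔ False from by simp, show (false = true) ↔ False from by simp,
    false_and, and_false, if_false, true_and, and_true, add_zero, zero_add, mul_zero, zero_mul]
  simp only [add_mul, mul_add, ite_mul, zero_mul, mul_ite, mul_zero, Finset.mul_sum,
    Finset.sum_add_distrib]
  rw [finsum_succ n (fun a b => pR n false a * (-cosOmega n b * pR n true b)),
    finsum_succ n (fun a b => pR n false a * (sinOmega n b * pR n false b)),
    finsum_pred n (fun a b => pR n true a * (sinOmega n b * pR n true b)),
    finsum_pred n (fun a b => pR n true a * (cosOmega n b * pR n false b)),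
    finsum_pair n (show 1 ≤ n by omega) (fun a b => pR n true a * (-2 * pR n false b))]
  simp only [← mul_assoc, mul_neg, neg_mul, Finset.sum_neg_distrib]
  ring

lemma hc2pos (n : ℕ) (hn : 2 ≤ n) : 0 < cSq n := by
  rw [cSq]
  apply Finset.sum_pos
  · intro x hx
    have hx' : x < n / 2 := Finset.mem_range.mp hx
    have : 0 < (n-1).choose x := Nat.choose_pos (by omega)
    positivity
  · exact ⟨0, Finset.mem_range.mpr (by omega)⟩

lemma hsq (n : ℕ) (hn : 2 ≤ n) (i : ℕ) (hi : i ≤ n - 1) :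
    aC n i * aC n i = 1 / (2 * cSq n * ((n-1).choose i : ℝ)) := by
  have hc2 := hc2pos n hn
  have hCi : (0:ℝ) < ((n-1).choose i : ℝ) := by exact_mod_cast Nat.choose_pos hi
  rw [aC, div_mul_div_comm, one_mul]
  rw [mul_mul_mul_comm, Real.mul_self_sqrt hc2.le, Real.mul_self_sqrt (by positivity)]
  ring_nf

lemma hrec (n : ℕ) (hn : 2 ≤ n) (i : ℕ) (hi : i + 1 ≤ n - 1) :
    ((i:ℝ)+1) * ((n-1).choose (i+1) : ℝ) = ((n:ℝ) - 1 - i) * ((n-1).choose i : ℝ) := by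
  have h := Nat.choose_succ_right_eq (n-1) i
  have hcast : (((n-1) - i : ℕ) : ℝ) = (n:ℝ) - 1 - i := by
    rw [Nat.cast_sub (by omega), Nat.cast_sub (by omega)]
    push_cast; ring
  have h' : (((n-1).choose (i+1) : ℝ)) * ((i:ℝ)+1)
      = ((n-1).choose i : ℝ) * (((n-1) - i : ℕ) : ℝ) := by
    exact_mod_cast congrArg (Nat.cast : ℕ → ℝ) h
  rw [hcast] at h'
  linarith [h']

lemma hcross (n : ℕ) (hn : 2 ≤ n) (i : ℕ) (hi : i + 1 ≤ n - 1) :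
    aC n i * sinOmega n (i+1) * aC n (i+1)
      = ((i:ℝ)+1) / ((n:ℝ) * cSq n * ((n-1).choose i : ℝ)) := by
  have hc2 := hc2pos n hn
  have hCi : (0:ℝ) < ((n-1).choose i : ℝ) := by exact_mod_cast Nat.choose_pos (by omega)
  have hCi1 : (0:ℝ) < ((n-1).choose (i+1) : ℝ) := by exact_mod_cast Nat.choose_pos hi
  have hn0 : (0:ℝ) < (n:ℝ) := by exact_mod_cast (by omega : 0 < n)
  set x := aC n i * sinOmega n (i+1) * aC n (i+1) with hx
  set y := ((i:ℝ)+1) / ((n:ℝ) * cSq n * ((n-1).choose i : ℝ)) with hy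
  have hx0 : 0 ≤ x := by
    rw [hx, aC, aC, sinOmega]
    positivity
  have hy0 : 0 ≤ y := by rw [hy]; positivity
  have hsqeq : x ^ 2 = y ^ 2 := by
    have hsin : sinOmega n (i+1) ^ 2 = (4 / (n:ℝ)^2) * (((i:ℝ)+1) * ((n:ℝ) - 1 - i)) := by
      have hle : ((i:ℝ)+1) + 1 ≤ (n:ℝ) := by exact_mod_cast (by omega : i + 2 ≤ n)
      rw [sinOmega, mul_pow, Real.sq_sqrt (by push_cast; nlinarith [hle])]
      push_cast
      ring
    have h1 : x ^ 2 = (aC n i * aC n i) * (aC n (i+1) * aC n (i+1)) * sinOmega n (i+1) ^ 2 := by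
      rw [hx]; ring
    rw [h1, hsq n hn i (by omega), hsq n hn (i+1) hi, hsin, hy]
    have hr := hrec n hn i hi
    field_simp
    linear_combination (-4:ℝ) * hr
  nlinarith [hsqeq, hx0, hy0, sq_nonneg (x - y), sq_nonneg (x + y)]

lemma tele (n : ℕ) (hn : 2 ≤ n) (i : ℕ) (hi : i + 1 ≤ n - 1) :
    ((n:ℝ)+1)/((n-1).choose i : ℝ) - 2*((i:ℝ)+1)/((n-1).choose i : ℝ)
      = (n:ℝ) * (((((i:ℝ)+1)/n - 1)/((n-1).choose (i+1) : ℝ))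
          - (((i:ℝ)/n - 1)/((n-1).choose i : ℝ))) := by
  have hr := hrec n hn i hi
  have hCi : (0:ℝ) < ((n-1).choose i : ℝ) := by exact_mod_cast Nat.choose_pos (by omega)
  have hCi1 : (0:ℝ) < ((n-1).choose (i+1) : ℝ) := by exact_mod_cast Nat.choose_pos hi
  have hn0 : (0:ℝ) < (n:ℝ) := by exact_mod_cast (by omega : 0 < n)
  field_simp
  linear_combination (-1:ℝ) * hr

lemma final_alg (A B c2 K N M : ℝ) (hK : K ≠ 0) (hN : N ≠ 0) (hc2 : c2 ≠ 0)
    (h1 : c2 = B + 1/K) (h2 : 2*A = (N+1)*B - N*((((M-1)/N - 1))/K + 1)) (h3 : N = 2*M) :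
    2*(A/(N*c2)) - 1/N + 1/c2 = 1 - 1/(2*c2*K) := by
  have hB : B = c2 - 1/K := by linarith
  have hA : A = ((N+1)*B - N*((((M-1)/N - 1))/K + 1))/2 := by linarith
  subst hB hA h3
  have hM : M ≠ 0 := by rintro rfl; exact hN (by ring)
  field_simp
  ring

lemma final_real (n : ℕ) (hn : 2 ≤ n) (heven : Even n) :
    (∑ i ∈ Finset.range n, pR n false i * sinOmega n (i+1) * pR n false (i+1))
      - (∑ i ∈ Finset.range n, pR n false i * cosOmega n (i+1) * pR n true (i+1))
      + (∑ j ∈ Finset.range n, pR n true (j+1) * sinOmega n j * pR n true j)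
      + (∑ j ∈ Finset.range n, pR n true (j+1) * cosOmega n j * pR n false j)
      - 2 * (pR n true 1 * pR n false 0)
      = 1 - 1 / (2 * cSq n * ((n-1).choose (n/2) : ℝ)) := by
  obtain ⟨m, hm2⟩ := heven
  have hmdiv : n / 2 = m := by omega
  have hm1 : 1 ≤ m := by omega
  have hmn1 : m ≤ n - 1 := by omega
  have hc2 := hc2pos n hn
  have hn0 : (0:ℝ) < (n:ℝ) := by exact_mod_cast (by omega : 0 < n)
  have hCpos : ∀ i, i ≤ n - 1 → (0:ℝ) < ((n-1).choose i : ℝ) := fun i h => by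
    exact_mod_cast Nat.choose_pos h
  -- pointwise descriptions of pR
  have hpF : ∀ i, i < m → pR n false i = aC n i := by
    intro i h; simp [pR, hmdiv, h]
  have hpFz : ∀ i, m ≤ i → pR n false i = 0 := by
    intro i h; simp only [pR, if_false, Bool.false_eq_true]; rw [if_neg (by omega)]
  have hpT : ∀ i, 1 ≤ i → i ≤ m → pR n true i = -aC n (i-1) := by
    intro i h1 h2; simp [pR, hmdiv, h1, h2]
  have hpTz : ∀ i, m < i → pR n true i = 0 := by
    intro i h; simp only [pR, if_true]; rw [if_neg (by omega)]
  have hpT0 : pR n true 0 = 0 := by simp [pR]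
  have hsub1 : Finset.range (m-1) ⊆ Finset.range n := Finset.range_subset_range.mpr (by omega)
  have hsub2 : Finset.range m ⊆ Finset.range n := Finset.range_subset_range.mpr (by omega)
  -- S1
  have hz1 : ∀ i ∈ Finset.range n, i ∉ Finset.range (m-1) →
      pR n false i * sinOmega n (i+1) * pR n false (i+1) = 0 := by
    intro i _ hni
    simp only [Finset.mem_range] at hni
    rw [hpFz (i+1) (by omega)]; ring
  have hS1 : (∑ i ∈ Finset.range n, pR n false i * sinOmega n (i+1) * pR n false (i+1))
      = ∑ i ∈ Finset.range (m-1), ((i:ℝ)+1) / ((n:ℝ) * cSq n * ((n-1).choose i : ℝ)) := by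
    rw [← Finset.sum_subset hsub1 hz1]
    refine Finset.sum_congr rfl fun i hi => ?_
    have hi' := Finset.mem_range.mp hi
    rw [hpF i (by omega), hpF (i+1) (by omega), hcross n hn i (by omega)]
  -- S2
  have hz2 : ∀ i ∈ Finset.range n, i ∉ Finset.range m →
      pR n false i * cosOmega n (i+1) * pR n true (i+1) = 0 := by
    intro i _ hni
    simp only [Finset.mem_range] at hni
    rw [hpFz i (by omega)]; ring
  have hS2 : (∑ i ∈ Finset.range n, pR n false i * cosOmega n (i+1) * pR n true (i+1))
      = -∑ i ∈ Finset.range m, cosOmega n (i+1) / (2 * cSq n * ((n-1).choose i : ℝ)) := by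
    rw [← Finset.sum_subset hsub2 hz2, ← Finset.sum_neg_distrib]
    refine Finset.sum_congr rfl fun i hi => ?_
    have hi' := Finset.mem_range.mp hi
    rw [hpF i hi', hpT (i+1) (by omega) (by omega), Nat.add_sub_cancel]
    rw [show aC n i * cosOmega n (i+1) * -aC n i
        = -(cosOmega n (i+1) * (aC n i * aC n i)) from by ring,
      hsq n hn i (by omega)]
    ring
  -- S3
  have hz3 : ∀ j ∈ Finset.range n, j ∉ Finset.range m →
      pR n true (j+1) * sinOmega n j * pR n true j = 0 := by
    intro j _ hnj
    simp only [Finset.mem_range] at hnj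
    rw [hpTz (j+1) (by omega)]; ring
  have hS3 : (∑ j ∈ Finset.range n, pR n true (j+1) * sinOmega n j * pR n true j)
      = ∑ i ∈ Finset.range (m-1), ((i:ℝ)+1) / ((n:ℝ) * cSq n * ((n-1).choose i : ℝ)) := by
    rw [← Finset.sum_subset hsub2 hz3]
    rw [show Finset.range m = Finset.range ((m-1)+1) from by congr 1; omega,
      Finset.sum_range_succ']
    rw [hpT0, mul_zero, add_zero]
    refine Finset.sum_congr rfl fun i hi => ?_
    have hi' := Finset.mem_range.mp hi
    rw [hpT (i+1+1) (by omega) (by omega), hpT (i+1) (by omega) (by omega),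
      Nat.add_sub_cancel, Nat.add_sub_cancel]
    rw [show -aC n (i+1) * sinOmega n (i+1) * -aC n i
        = aC n i * sinOmega n (i+1) * aC n (i+1) from by ring,
      hcross n hn i (by omega)]
  -- S4
  have hz4 : ∀ j ∈ Finset.range n, j ∉ Finset.range m →
      pR n true (j+1) * cosOmega n j * pR n false j = 0 := by
    intro j _ hnj
    simp only [Finset.mem_range] at hnj
    rw [hpTz (j+1) (by omega)]; ring
  have hS4 : (∑ j ∈ Finset.range n, pR n true (j+1) * cosOmega n j * pR n false j)
      = -∑ i ∈ Finset.range m, cosOmega n i / (2 * cSq n * ((n-1).choose i : ℝ)) := by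
    rw [← Finset.sum_subset hsub2 hz4, ← Finset.sum_neg_distrib]
    refine Finset.sum_congr rfl fun i hi => ?_
    have hi' := Finset.mem_range.mp hi
    rw [hpT (i+1) (by omega) (by omega), Nat.add_sub_cancel, hpF i hi']
    rw [show -aC n i * cosOmega n i * aC n i
        = -(cosOmega n i * (aC n i * aC n i)) from by ring,
      hsq n hn i (by omega)]
    ring
  -- S5
  have hS5 : pR n true 1 * pR n false 0
      = -(1 / (2 * cSq n * ((n-1).choose 0 : ℝ))) := by
    rw [hpT 1 le_rfl (by omega), hpF 0 (by omega)]
    rw [show ((1:ℕ)-1) = 0 from rfl, neg_mul, hsq n hn 0 (by omega)]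
  rw [hS1, hS2, hS3, hS4, hS5, hmdiv]
  -- abbreviations
  have hcSq : cSq n = ∑ i ∈ Finset.range m, 1 / ((n-1).choose i : ℝ) := by
    rw [cSq, hmdiv]
  -- the cosine sums combine
  have hPQ : (∑ i ∈ Finset.range m, cosOmega n (i+1) / (2 * cSq n * ((n-1).choose i : ℝ)))
      - (∑ i ∈ Finset.range m, cosOmega n i / (2 * cSq n * ((n-1).choose i : ℝ)))
      = -(1/(n:ℝ)) := by
    rw [← Finset.sum_sub_distrib]
    have hterm : ∀ i ∈ Finset.range m,
        cosOmega n (i+1) / (2 * cSq n * ((n-1).choose i : ℝ))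
          - cosOmega n i / (2 * cSq n * ((n-1).choose i : ℝ))
        = -(1/((n:ℝ) * cSq n)) * (1 / ((n-1).choose i : ℝ)) := by
      intro i hi
      have hi' := Finset.mem_range.mp hi
      have hCi := hCpos i (by omega)
      have hcdiff : cosOmega n (i+1) - cosOmega n i = -(2/(n:ℝ)) := by
        simp only [cosOmega]; push_cast; field_simp; ring
      rw [div_sub_div_same, hcdiff]
      field_simp
    rw [Finset.sum_congr rfl hterm, ← Finset.mul_sum, ← hcSq]
    field_simp
  -- main sums to A/(N c2)
  have hA' : (∑ i ∈ Finset.range (m-1), ((i:ℝ)+1) / ((n:ℝ) * cSq n * ((n-1).choose i : ℝ)))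
      = (∑ i ∈ Finset.range (m-1), ((i:ℝ)+1) / ((n-1).choose i : ℝ)) / ((n:ℝ) * cSq n) := by
    rw [Finset.sum_div]
    refine Finset.sum_congr rfl fun i hi => ?_
    have hi' := Finset.mem_range.mp hi
    rw [mul_comm ((n:ℝ) * cSq n) (((n-1).choose i : ℝ)), ← div_div]
  rw [hA']
  set A := ∑ i ∈ Finset.range (m-1), ((i:ℝ)+1) / ((n-1).choose i : ℝ) with hA
  set B := ∑ i ∈ Finset.range (m-1), (1:ℝ) / ((n-1).choose i : ℝ) with hB
  -- choose symmetry
  have hCsymm : ((n-1).choose (m-1) : ℝ) = ((n-1).choose m : ℝ) := by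
    have : (n-1).choose (m-1) = (n-1).choose m := by
      rw [← Nat.choose_symm (show m ≤ n-1 from hmn1)]
      congr 1
      omega
    exact_mod_cast congrArg (Nat.cast : ℕ → ℝ) this
  -- c2 in terms of B
  have hc2B : cSq n = B + 1/((n-1).choose m : ℝ) := by
    rw [hcSq, show Finset.range m = Finset.range ((m-1)+1) from by congr 1; omega,
      Finset.sum_range_succ, hCsymm]
  -- telescoping
  have hmm1 : ((m-1 : ℕ) : ℝ) = (m:ℝ) - 1 := by
    rw [Nat.cast_sub hm1]; norm_num
  have h2A : 2*A = ((n:ℝ)+1)*B - (n:ℝ)*(((((m:ℝ)-1)/n - 1))/((n-1).choose m : ℝ) + 1) := by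
    have htel : ∑ i ∈ Finset.range (m-1),
        (((n:ℝ)+1)/((n-1).choose i : ℝ) - 2*((i:ℝ)+1)/((n-1).choose i : ℝ))
        = (n:ℝ) * ((((m-1:ℕ):ℝ)/n - 1)/((n-1).choose (m-1) : ℝ)
            - (((0:ℕ):ℝ)/n - 1)/((n-1).choose 0 : ℝ)) := by
      rw [Finset.sum_congr rfl (fun i hi => tele n hn i
        (by have := Finset.mem_range.mp hi; omega)),
        ← Finset.sum_range_sub (fun i => (((i:ℕ):ℝ)/n - 1)/((n-1).choose i : ℝ)) (m-1),
        Finset.mul_sum]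
      exact Finset.sum_congr rfl fun i _ => by push_cast; ring
    have hlhs : ∑ i ∈ Finset.range (m-1),
        (((n:ℝ)+1)/((n-1).choose i : ℝ) - 2*((i:ℝ)+1)/((n-1).choose i : ℝ))
        = ((n:ℝ)+1)*B - 2*A := by
      rw [Finset.sum_sub_distrib, hA, hB, Finset.mul_sum]
      congr 1
      · exact Finset.sum_congr rfl fun i _ => by rw [mul_one_div]
      · rw [Finset.sum_congr rfl (fun i _ => by rw [mul_div_assoc]), ← Finset.mul_sum]
    rw [hlhs, hmm1, hCsymm] at htel
    simp only [Nat.cast_zero, Nat.choose_zero_right, Nat.cast_one, zero_div, div_one] at htel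
    linarith [htel]
  have hN2M : (n:ℝ) = 2*(m:ℝ) := by exact_mod_cast (by omega : n = 2*m)
  have main := final_alg A B (cSq n) ((n-1).choose m : ℝ) (n:ℝ) (m:ℝ)
    (ne_of_gt (hCpos m hmn1)) (ne_of_gt hn0) (ne_of_gt hc2) hc2B h2A hN2M
  have hC0 : ((n-1).choose 0 : ℝ) = 1 := by norm_num
  rw [hC0]
  linear_combination main + hPQ


/-- `⟨ψ₁|U'|ψ₁⟩ = 1 − 1/(2c² C(n−1, n/2))`. -/
theorem psi1_expectation (n : ℕ) (hn : 2 ≤ n) (heven : Even n) :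
    star (linePsi1 n) ⬝ᵥ (collapsedU' n).mulVec (linePsi1 n)
      = 1 - 1 / (2 * (cSq n : ℂ) * ((n - 1).choose (n / 2) : ℂ)) := by
  rw [step1 n hn, final_real n hn heven]
  push_cast
  ring
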